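/- Let Φ : Matrix (Fin n) (Fin n) ℂ →ₗ[ℂ] Matrix (Fin n) (Fin n) ℂ be a linear map whose Choi matrix is block-diagonal, i.e. Φ (E i k) = 0 whenever i ≠ k. Then Φ is completely positive if and only if Φ is co-completely positive. -/

import Mathlib

open Matrix ComplexOrder

/-- `Φ` is completely positive: every blockwise application of `Φ` to a positive semidefinite
matrix on `ℂ^m ⊗ ℂ^n` yields a positive semidefinite matrix. -/
def IsCP (n : ℕ) (Φ : Matrix (Fin n) (Fin n) ℂ →ₗ[ℂ] Matrix (Fin n) (Fin n) ℂ) : Prop :=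
  ∀ (m : ℕ) (A : Matrix (Fin m × Fin n) (Fin m × Fin n) ℂ), A.PosSemidef →
    (Matrix.of fun p q : Fin m × Fin n =>
      Φ (Matrix.of fun i' j' => A (p.1, i') (q.1, j')) p.2 q.2).PosSemidef

/-- Transposition (in the standard basis) as a linear map on matrices. -/
def transpLM (n : ℕ) : Matrix (Fin n) (Fin n) ℂ →ₗ[ℂ] Matrix (Fin n) (Fin n) ℂ where
  toFun X := Xᵀ
  map_add' X Y := by simp
  map_smul' c X := by simp

/-- `Φ` is co-completely positive: `X ↦ Φ Xᵀ` is completely positive. -/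
def IsCoCP (n : ℕ) (Φ : Matrix (Fin n) (Fin n) ℂ →ₗ[ℂ] Matrix (Fin n) (Fin n) ℂ) : Prop :=
  IsCP n (Φ ∘ₗ transpLM n)

lemma std_smul {n : ℕ} (i j : Fin n) (c : ℂ) :
    Matrix.single i j c = c • Matrix.single i j 1 := by
  rw [Matrix.smul_single, smul_eq_mul, mul_one]

/-- If the Choi matrix of `Φ` is block-diagonal (i.e. `Φ (E i k) = 0` for `i ≠ k`),
then `Φ` is completely positive iff it is co-completely positive. -/
theorem blockDiagonal_cp_iff_coCP (n : ℕ)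
    (Φ : Matrix (Fin n) (Fin n) ℂ →ₗ[ℂ] Matrix (Fin n) (Fin n) ℂ)
    (hblock : ∀ i k : Fin n, i ≠ k → Φ (Matrix.single i k 1) = 0) :
    IsCP n Φ ↔ IsCoCP n Φ := by
  have key : Φ ∘ₗ transpLM n = Φ := by
    apply LinearMap.ext
    intro X
    have hX := Matrix.matrix_eq_sum_single X
    have hXT := Matrix.matrix_eq_sum_single Xᵀ
    have h1 : Φ Xᵀ = ∑ i, ∑ k, Xᵀ i k • Φ (Matrix.single i k 1) := by
      conv_lhs => rw [hXT]
      simp only [map_sum]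
      refine Finset.sum_congr rfl fun i _ => Finset.sum_congr rfl fun k _ => ?_
      rw [std_smul, _root_.map_smul]
    have h2 : Φ X = ∑ i, ∑ k, X i k • Φ (Matrix.single i k 1) := by
      conv_lhs => rw [hX]
      simp only [map_sum]
      refine Finset.sum_congr rfl fun i _ => Finset.sum_congr rfl fun k _ => ?_
      rw [std_smul, _root_.map_smul]
    have : (Φ ∘ₗ transpLM n) X = Φ Xᵀ := rfl
    rw [this, h1, h2]
    apply Finset.sum_congr rfl
    intro i _
    apply Finset.sum_congr rfl
    intro k _
    by_cases h : i = k
    · subst h; simp [Matrix.transpose_apply]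
    · rw [hblock i k h]; simp
  unfold IsCoCP
  rw [key]
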